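/- The intercept β_0 admits the closed form β_0 = [1/2 − π_0 + Δ^{-2} log(π_1/π_0)] · (π_0 π_1 Δ²)/(1 + π_0 π_1 Δ²), where Δ² = (α_1 − α_0)^⊤ Σ_{Z|Y}^{-1}(α_1 − α_0). -/

import Mathlib

open Matrix

lemma vecMulVec_mulVec' {K : ℕ} (d v : Fin K → ℝ) :
    vecMulVec d d *ᵥ v = (d ⬝ᵥ v) • d := by
  funext i
  simp [vecMulVec, mulVec, dotProduct, Finset.mul_sum]
  rw [Finset.sum_mul]
  exact Finset.sum_congr rfl fun j _ => by ring

/-- The intercept `β_0` admits the closed form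
`β_0 = [1/2 - π_0 + Δ⁻² log(π_1/π_0)] ⬝ (π_0π_1Δ²)/(1+π_0π_1Δ²)`,
where `Δ² = (α_1-α_0)ᵀ Σ_{Z|Y}⁻¹ (α_1-α_0)`. -/
theorem intercept_closed_form {K : ℕ}
    (S : Matrix (Fin K) (Fin K) ℝ) (hS : S.PosDef)
    (α0 α1 : Fin K → ℝ) (hne : α0 ≠ α1)
    (π0 π1 : ℝ) (hπ0 : 0 < π0) (hπ1 : 0 < π1) (hsum : π0 + π1 = 1)
    (hmean : π0 • α0 + π1 • α1 = 0)
    (SigmaZ : Matrix (Fin K) (Fin K) ℝ)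
    (hSigmaZ : SigmaZ = S + (π0 * π1) • vecMulVec (α1 - α0) (α1 - α0))
    (Δ2 : ℝ) (hΔ2 : Δ2 = (α1 - α0) ⬝ᵥ (S⁻¹ *ᵥ (α1 - α0)))
    (β : Fin K → ℝ)
    (hβ : β = (π0 * π1) • (SigmaZ⁻¹ *ᵥ (α1 - α0)))
    (β0 : ℝ)
    (hβ0 : β0 = -(1/2) * ((α0 + α1) ⬝ᵥ β)
      + (1 - (α1 - α0) ⬝ᵥ β) * (π0 * π1) * Real.log (π1 / π0)) :
    β0 = (1/2 - π0 + Δ2⁻¹ * Real.log (π1 / π0))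
      * (π0 * π1 * Δ2) / (1 + π0 * π1 * Δ2) := by
  set d : Fin K → ℝ := α1 - α0 with hd
  have hdne : d ≠ 0 := sub_ne_zero.mpr (Ne.symm hne)
  have hSinv : S⁻¹.PosDef := hS.inv
  have hΔpos : 0 < Δ2 := by
    rw [hΔ2]
    have := hSinv.dotProduct_mulVec_pos (x := d) (by simpa using hdne)
    simpa using this
  set c : ℝ := 1 + π0 * π1 * Δ2 with hc
  have hcpos : 0 < c := by positivity
  -- SigmaZ is posdef
  have hZpd : SigmaZ.PosDef := by
    rw [hSigmaZ]
    refine hS.add_posSemidef (Matrix.PosSemidef.of_dotProduct_mulVec_nonneg ?_ fun x => ?_)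
    · ext i j
      simp [vecMulVec, conjTranspose, mul_comm]
    · have : star x ⬝ᵥ ((π0 * π1) • vecMulVec d d) *ᵥ x
          = (π0 * π1) * (d ⬝ᵥ x) ^ 2 := by
        rw [smul_mulVec, vecMulVec_mulVec']
        have hx : star x = x := by simp
        rw [hx, dotProduct_smul, dotProduct_smul, dotProduct_comm x d]
        simp only [smul_eq_mul]; ring
      rw [this]
      positivity
  -- key identity
  have hkey : SigmaZ⁻¹ *ᵥ d = c⁻¹ • (S⁻¹ *ᵥ d) := by
    have hmv : SigmaZ *ᵥ (c⁻¹ • (S⁻¹ *ᵥ d)) = d := by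
      rw [mulVec_smul, hSigmaZ, add_mulVec, smul_mulVec,
        mulVec_mulVec, mul_nonsing_inv S ((Matrix.isUnit_iff_isUnit_det S).mp hS.isUnit), one_mulVec,
        vecMulVec_mulVec', ← hΔ2]
      rw [smul_smul, smul_add, smul_smul]
      have : c⁻¹ • d + (c⁻¹ * (π0 * π1 * Δ2)) • d = (c⁻¹ * c) • d := by
        rw [← add_smul]; congr 1; rw [hc]; ring
      rw [this, inv_mul_cancel₀ hcpos.ne', one_smul]
    calc SigmaZ⁻¹ *ᵥ d = SigmaZ⁻¹ *ᵥ (SigmaZ *ᵥ (c⁻¹ • (S⁻¹ *ᵥ d))) := by rw [hmv]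
    _ = c⁻¹ • (S⁻¹ *ᵥ d) := by
        rw [mulVec_mulVec, nonsing_inv_mul SigmaZ ((Matrix.isUnit_iff_isUnit_det SigmaZ).mp hZpd.isUnit), one_mulVec]
  -- dot products
  have hdβ : d ⬝ᵥ β = π0 * π1 * c⁻¹ * Δ2 := by
    rw [hβ, hkey, dotProduct_smul, dotProduct_smul, ← hΔ2]
    simp [smul_eq_mul]; ring
  have hα0 : α0 = (-π1) • d := by
    have h1 : α0 = (π0 + π1) • α0 := by rw [hsum, one_smul]
    rw [h1, add_smul]
    have h2 : π0 • α0 = -(π1 • α1) := by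
      rw [eq_neg_iff_add_eq_zero]; exact hmean
    rw [h2, hd]
    funext i; simp; ring
  have hα1 : α1 = π0 • d := by
    have h1 : α1 = (π0 + π1) • α1 := by rw [hsum, one_smul]
    rw [h1, add_smul]
    have h2 : π1 • α1 = -(π0 • α0) := by
      rw [eq_neg_iff_add_eq_zero, add_comm]; exact hmean
    rw [h2, hd]
    funext i; simp; ring
  have hsumd : α0 + α1 = (π0 - π1) • d := by
    rw [hα0, hα1, ← add_smul]; ring_nf
  have hsβ : (α0 + α1) ⬝ᵥ β = (π0 - π1) * (π0 * π1 * c⁻¹ * Δ2) := by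
    rw [hsumd, smul_dotProduct, hdβ, smul_eq_mul]
  -- 1 - d⬝β = 1/c
  have h1mt : 1 - d ⬝ᵥ β = c⁻¹ := by
    rw [hdβ]
    field_simp
    rw [hc]; ring
  rw [hβ0, hsβ, h1mt]
  have hπ1' : π1 = 1 - π0 := by linarith
  rw [hπ1']
  field_simp
  ring
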